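/- Let B ∈ ℝ^{n×m} be the oriented incidence matrix of an undirected graph on n nodes, let L ∈ ℝ^{n×n} satisfy L·1_n = 0, and let q̄ ∈ ℝ. Then the curves x̃(t) = sin(t)·1_n, μ̃(t) = 0 ∈ ℝ^m, θ̃(t) = cos(t)·1_n form a solution of the linear system ẋ̃ = −B μ̃ + θ̃, μ̇̃ = Bᵀ x̃, θ̇̃ = −x̃ − q̄² L θ̃, with initial conditions x̃(0) = 0, μ̃(0) = 0, θ̃(0) = 1_n; in particular this solution is periodic and does not converge to an equilibrium. -/
import Mathlib


open Matrix BigOperators Filter Topology MeasureTheory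

/-- An undirected graph on `Fin n` with `m` edges, each edge given an arbitrary
orientation: edge `k` goes from its positive end `pos k` to its negative end `neg k`. -/
structure OrientedGraph (n m : ℕ) where
  pos : Fin m → Fin n
  neg : Fin m → Fin n
  ne_ends : ∀ k, pos k ≠ neg k

namespace OrientedGraph

variable {n m : ℕ}

/-- The oriented incidence matrix `B ∈ ℝ^{n×m}`. -/
def inc (G : OrientedGraph n m) : Matrix (Fin n) (Fin m) ℝ :=
  Matrix.of fun i k => if i = G.pos k then (1 : ℝ) else if i = G.neg k then -1 else 0

/-- Adjacency in the underlying undirected graph. -/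
def Adj (G : OrientedGraph n m) (i j : Fin n) : Prop :=
  ∃ k, (G.pos k = i ∧ G.neg k = j) ∨ (G.pos k = j ∧ G.neg k = i)

/-- Connectedness of the underlying undirected graph. -/
def Connected (G : OrientedGraph n m) : Prop :=
  ∀ i j : Fin n, Relation.ReflTransGen G.Adj i j

end OrientedGraph

/-- The matrix `E = [I_p ; 0_{(n-p)×p}]` selecting the first `p` nodes. -/
def selE (n p : ℕ) : Matrix (Fin n) (Fin p) ℝ :=
  Matrix.of fun i j => if (i : ℕ) = (j : ℕ) then 1 else 0

/-- Componentwise application of a family of scalar functions. -/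
def cw {k : ℕ} (f : Fin k → ℝ → ℝ) (x : Fin k → ℝ) : Fin k → ℝ :=
  fun i => f i (x i)

/-- `λ* = (1ₙᵀ d + 1ₚᵀ Q⁻¹ r)/(1ₚᵀ Q⁻¹ 1ₚ)` for `Q = diag q`. -/
noncomputable def lamStar {n p : ℕ} (q r : Fin p → ℝ) (d : Fin n → ℝ) : ℝ :=
  ((∑ i, d i) + ∑ i, r i / q i) / (∑ i, (q i)⁻¹)

/-- The optimal input `ū = Q⁻¹(λ*·1ₚ − r)`. -/
noncomputable def uOpt {n p : ℕ} (q r : Fin p → ℝ) (d : Fin n → ℝ) : Fin p → ℝ :=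
  fun i => (lamStar q r d - r i) / q i

/-- The cost `C(u) = ½ uᵀQu + rᵀu + s` for `Q = diag q`. -/
noncomputable def cost {p : ℕ} (q r : Fin p → ℝ) (s : ℝ) (u : Fin p → ℝ) : ℝ :=
  (1 / 2) * (∑ i, q i * u i ^ 2) + (∑ i, r i * u i) + s

/-- `L` is the Laplacian matrix of a balanced, strongly connected weighted digraph:
nonpositive off-diagonal entries, zero row sums, zero column sums, and the digraph
whose arcs are the pairs with `L i j < 0` is strongly connected. -/
structure IsBalancedStronglyConnectedLaplacian {p : ℕ} (L : Matrix (Fin p) (Fin p) ℝ) : Prop where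
  offdiag_nonpos : ∀ i j, i ≠ j → L i j ≤ 0
  rowsum : L.mulVec (fun _ => 1) = 0
  colsum : Matrix.vecMul (fun _ => 1) L = 0
  sconn : ∀ i j : Fin p, Relation.ReflTransGen (fun a b => a ≠ b ∧ L a b < 0) i j

lemma inc_colsum {n m : ℕ} (G : OrientedGraph n m) (k : Fin m) :
    ∑ i, G.inc i k = 0 := by
  have hne := G.ne_ends k
  have h : ∀ i : Fin n, G.inc i k =
      (if i = G.pos k then (1:ℝ) else 0) + (if i = G.neg k then -1 else 0) := by
    intro i
    simp only [OrientedGraph.inc, Matrix.of_apply]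
    by_cases h1 : i = G.pos k <;> by_cases h2 : i = G.neg k <;> simp_all
  simp [h, Finset.sum_add_distrib]

/-- The curves `x̃(t) = sin t·1`, `μ̃(t) = 0`, `θ̃(t) = cos t·1` solve
`ẋ̃ = −Bμ̃ + θ̃`, `μ̇̃ = Bᵀx̃`, `θ̇̃ = −x̃ − q̄²Lθ̃` with `x̃(0)=0`, `μ̃(0)=0`, `θ̃(0)=1`;
this solution is periodic and does not converge. -/
theorem oscillating_solution {n m : ℕ} (hn : 0 < n) (G : OrientedGraph n m)
    (L : Matrix (Fin n) (Fin n) ℝ) (hL : L.mulVec (fun _ => 1) = 0) (qb : ℝ) :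
    let xt : ℝ → Fin n → ℝ := fun t _ => Real.sin t
    let mt : ℝ → Fin m → ℝ := fun _ _ => 0
    let tht : ℝ → Fin n → ℝ := fun t _ => Real.cos t
    (∀ t i, HasDerivAt (fun s => xt s i) ((-(G.inc.mulVec (mt t)) + tht t) i) t) ∧
    (∀ t k, HasDerivAt (fun s => mt s k) (((G.inc)ᵀ.mulVec (xt t)) k) t) ∧
    (∀ t i, HasDerivAt (fun s => tht s i)
      ((-(xt t) - qb ^ 2 • L.mulVec (tht t)) i) t) ∧
    xt 0 = 0 ∧ mt 0 = 0 ∧ tht 0 = (fun _ => 1) ∧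
    Function.Periodic xt (2 * Real.pi) ∧ Function.Periodic mt (2 * Real.pi) ∧
    Function.Periodic tht (2 * Real.pi) ∧
    ¬ (∃ (xs : Fin n → ℝ) (ms : Fin m → ℝ) (ths : Fin n → ℝ),
        Tendsto xt atTop (𝓝 xs) ∧ Tendsto mt atTop (𝓝 ms) ∧
        Tendsto tht atTop (𝓝 ths)) := by
  
  intro xt mt tht
  have two_pi_pos : (0:ℝ) < 2 * Real.pi := by positivity
  refine ⟨?_, ?_, ?_, ?_, ?_, ?_, ?_, ?_, ?_, ?_⟩
  · intro t i
    have h0 : G.inc.mulVec (mt t) = 0 := by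
      funext j; simp [Matrix.mulVec, dotProduct, mt]
    simpa [h0, tht] using Real.hasDerivAt_sin t
  · intro t k
    have : ((G.inc)ᵀ.mulVec (xt t)) k = 0 := by
      simp only [Matrix.mulVec, dotProduct, Matrix.transpose_apply, xt]
      rw [← Finset.sum_mul, inc_colsum, zero_mul]
    simpa [this] using hasDerivAt_const t (0:ℝ)
  · intro t i
    have h0 : L.mulVec (tht t) = 0 := by
      have : tht t = Real.cos t • (fun _ => (1:ℝ)) := by
        funext j; simp [tht]
      rw [this, Matrix.mulVec_smul, hL, smul_zero]
    have := (Real.hasDerivAt_cos t)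
    simpa [h0, xt] using this
  · funext i; simp [xt]
  · rfl
  · funext i; simp [tht]
  · intro t; funext i; simp [xt, Real.sin_add_two_pi]
  · intro t; rfl
  · intro t; funext i; simp [tht, Real.cos_add_two_pi]
  · rintro ⟨xs, ms, ths, hx, -, -⟩
    set i : Fin n := ⟨0, hn⟩
    have hx' : Tendsto (fun t => Real.sin t) atTop (𝓝 (xs i)) :=
      ((continuous_apply i).continuousAt.tendsto).comp hx
    have hseq : Tendsto (fun k : ℕ => (k : ℝ) * (2 * Real.pi)) atTop atTop :=
      Tendsto.atTop_mul_const two_pi_pos tendsto_natCast_atTop_atTop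
    have h1 : Tendsto (fun k : ℕ => Real.sin ((k : ℝ) * (2 * Real.pi))) atTop (𝓝 (xs i)) :=
      hx'.comp hseq
    have h1' : ∀ k : ℕ, Real.sin ((k : ℝ) * (2 * Real.pi)) = 0 := by
      intro k
      have : (k : ℝ) * (2 * Real.pi) = (2 * k : ℕ) * Real.pi := by push_cast; ring
      rw [this, Real.sin_nat_mul_pi]
    have hc0 : xs i = 0 :=
      tendsto_nhds_unique h1 (by simp only [h1']; exact tendsto_const_nhds)
    have hseq2 : Tendsto (fun k : ℕ => Real.pi / 2 + (k : ℝ) * (2 * Real.pi)) atTop atTop :=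
      tendsto_atTop_add_const_left _ _ hseq
    have h2 : Tendsto (fun k : ℕ => Real.sin (Real.pi / 2 + (k : ℝ) * (2 * Real.pi))) atTop (𝓝 (xs i)) :=
      hx'.comp hseq2
    have h2' : ∀ k : ℕ, Real.sin (Real.pi / 2 + (k : ℝ) * (2 * Real.pi)) = 1 := by
      intro k
      rw [Real.sin_add_nat_mul_two_pi, Real.sin_pi_div_two]
    have hc1 : xs i = 1 :=
      tendsto_nhds_unique h2 (by simp only [h2']; exact tendsto_const_nhds)
    rw [hc0] at hc1
    norm_num at hc1
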